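/- Small angular cap bilinear estimate: Let 0 < c < 1. There is a constant C = C(c) such that the following holds. Let N₀, N₁, N₂, L₀, L₁, L₂ ≥ 1 be dyadic with 1 < N₀ ≤ 2⁷(1−c)^{−1}N₁, N₁ ≤ 2⁴(1−c)^{−1}N₂ and N₂ ≤ 2⁴(1−c)^{−1}N₁, let A ≥ N₁^{3/2}, and let ω₁, ω₂ ⊂ S² have angular diameter ≤ 1/A. Let f, g₁, g₂ ∈ L²(ℝ³×ℝ) with supp f ⊂ K^{±,c}_{N₀,L₀} (for either sign ±), supp g₁ ⊂ Q_{ω₁} ∩ K^−_{N₁,L₁}, supp g₂ ⊂ Q_{ω₂} ∩ K^+_{N₂,L₂}. Then |I(f,g₁,g₂)| ≤ C min(L₀,L₁,L₂)^{1/2} ‖f‖_{L²} ‖g₁‖_{L²} ‖g₂‖_{L²}. -/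

import Mathlib

noncomputable section

open MeasureTheory Real ENNReal
open scoped NNReal


abbrev Sp3 := EuclideanSpace ℝ (Fin 3)

/-- Japanese bracket `⟨r⟩ = (1 + r²)^{1/2}`. -/
def jb (r : ℝ) : ℝ := Real.sqrt (1 + r ^ 2)

/-- Space-time Fourier transform on `ℝ³ × ℝ`. -/
def ftST (u : Sp3 × ℝ → ℂ) (p : Sp3 × ℝ) : ℂ :=
  ∫ q : Sp3 × ℝ, Complex.exp (-Complex.I * (((inner ℝ q.1 p.1 : ℝ) + q.2 * p.2 : ℝ) : ℂ)) * u q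

/-- Inverse space-time Fourier transform on `ℝ³ × ℝ`. -/
def ftSTinv (u : Sp3 × ℝ → ℂ) (q : Sp3 × ℝ) : ℂ :=
  (((2 * Real.pi) ^ (4 : ℕ) : ℝ) : ℂ)⁻¹ *
    ∫ p : Sp3 × ℝ, Complex.exp (Complex.I * (((inner ℝ q.1 p.1 : ℝ) + q.2 * p.2 : ℝ) : ℂ)) * u p

/-- `X^{s,b}`-type norm with sign `σ` and propagation speed `c` (wave case: `c = 1`). -/
def Xnorm (σ c s b : ℝ) (u : Sp3 × ℝ → ℂ) : ℝ≥0∞ :=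
  (∫⁻ p : Sp3 × ℝ,
      ENNReal.ofReal
        (jb ‖p.1‖ ^ (2 * s) * jb (p.2 + σ * c * ‖p.1‖) ^ (2 * b) * ‖ftST u p‖ ^ 2)) ^ (1 / 2 : ℝ)

/-- Dyadic frequency-modulation block `K^{σ,c}_{N,L}`. -/
def Kset (σ c N L : ℝ) : Set (Sp3 × ℝ) :=
  {p | N ≤ jb ‖p.1‖ ∧ jb ‖p.1‖ ≤ 2 * N ∧ L ≤ jb (p.2 + σ * c * ‖p.1‖) ∧
    jb (p.2 + σ * c * ‖p.1‖) ≤ 2 * L}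

/-- Space-time Fourier projection onto the set `K`. -/
def Pproj (K : Set (Sp3 × ℝ)) (u : Sp3 × ℝ → ℂ) : Sp3 × ℝ → ℂ :=
  ftSTinv (K.indicator (ftST u))

def IsDyadic (N : ℝ) : Prop := ∃ k : ℕ, N = 2 ^ k

/-- `Q_ω`: space-time frequencies whose spatial direction lies in `ω ⊆ S²`. -/
def Qcap (ω : Set Sp3) : Set (Sp3 × ℝ) := {p | p.1 ≠ 0 ∧ ‖p.1‖⁻¹ • p.1 ∈ ω}

/-- Angular separation of two subsets of the sphere. -/
def angSep (ω₁ ω₂ : Set Sp3) : ℝ :=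
  sInf {θ : ℝ | ∃ x ∈ ω₁, ∃ y ∈ ω₂, θ = InnerProductGeometry.angle x y}

/-- The trilinear convolution form `I(f,g₁,g₂)`. -/
def trI (f g₁ g₂ : Sp3 × ℝ → ℂ) : ℂ :=
  ∫ q : (Sp3 × ℝ) × (Sp3 × ℝ), f (q.1.1 + q.2.1, q.1.2 + q.2.2) * g₁ q.1 * g₂ q.2



open scoped RealInnerProductSpace

abbrev Mst := Sp3 × ℝ
lemma abs_le_jb (r : ℝ) : |r| ≤ jb r := by
  rw [jb, ← Real.sqrt_sq_eq_abs]
  exact Real.sqrt_le_sqrt (by nlinarith)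

lemma continuous_jb : Continuous jb := by
  unfold jb; fun_prop

lemma IsDyadic.one_le {N : ℝ} (h : IsDyadic N) : 1 ≤ N := by
  obtain ⟨k, rfl⟩ := h
  exact one_le_pow₀ (by norm_num)

lemma measurableSet_Kset (σ c N L : ℝ) : MeasurableSet (Kset σ c N L) := by
  have h1 : Continuous fun p : Mst => jb ‖p.1‖ := by
    apply continuous_jb.comp; fun_prop
  have h2 : Continuous fun p : Mst => jb (p.2 + σ * c * ‖p.1‖) := by
    apply continuous_jb.comp; fun_prop
  exact ((measurableSet_le measurable_const h1.measurable).inter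
    ((measurableSet_le h1.measurable measurable_const).inter
      ((measurableSet_le measurable_const h2.measurable).inter
        (measurableSet_le h2.measurable measurable_const))))

instance : (volume : Measure Mst).IsAddLeftInvariant := by
  rw [Measure.volume_eq_prod]; infer_instance
instance : (volume : Measure Mst).IsAddRightInvariant := by
  rw [Measure.volume_eq_prod]; infer_instance

lemma vol_slab {T : Set Sp3} (hT : MeasurableSet T) {g : Sp3 → ℝ} (hg : Measurable g)
    (r : ℝ) :
    volume {y : Mst | y.1 ∈ T ∧ |y.2 - g y.1| ≤ r} ≤ ENNReal.ofReal (2 * r) * volume T := by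
  have hS : MeasurableSet {y : Mst | y.1 ∈ T ∧ |y.2 - g y.1| ≤ r} := by
    refine (measurable_fst hT).inter ?_
    have : Measurable fun y : Mst => |y.2 - g y.1| :=
      (measurable_snd.sub (hg.comp measurable_fst)).abs
    exact measurableSet_le this measurable_const
  rw [Measure.volume_eq_prod]
  rw [Measure.prod_apply hS]
  have hslice : ∀ ξ : Sp3, (volume : Measure ℝ) (Prod.mk ξ ⁻¹' {y : Mst | y.1 ∈ T ∧ |y.2 - g y.1| ≤ r})
      ≤ T.indicator (fun _ => ENNReal.ofReal (2 * r)) ξ := by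
    intro ξ
    by_cases hξ : ξ ∈ T
    · have : Prod.mk ξ ⁻¹' {y : Mst | y.1 ∈ T ∧ |y.2 - g y.1| ≤ r} ⊆ Set.Icc (g ξ - r) (g ξ + r) := by
        intro τ hτ
        simp only [Set.mem_preimage, Set.mem_setOf_eq] at hτ
        have := abs_le.mp hτ.2
        constructor <;> linarith [this.1, this.2]
      calc volume _ ≤ volume (Set.Icc (g ξ - r) (g ξ + r)) := measure_mono this
        _ = ENNReal.ofReal (2 * r) := by rw [Real.volume_Icc]; ring_nf
        _ = T.indicator (fun _ => ENNReal.ofReal (2 * r)) ξ := by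
            rw [Set.indicator_of_mem hξ]
    · have : Prod.mk ξ ⁻¹' {y : Mst | y.1 ∈ T ∧ |y.2 - g y.1| ≤ r} = ∅ := by
        ext τ; simp only [Set.mem_preimage, Set.mem_setOf_eq, Set.mem_empty_iff_false, iff_false]
        exact fun h => hξ h.1
      rw [this]; simp
  calc ∫⁻ ξ, (volume : Measure ℝ) (Prod.mk ξ ⁻¹' _) ∂(volume : Measure Sp3)
      ≤ ∫⁻ ξ, T.indicator (fun _ => ENNReal.ofReal (2 * r)) ξ := lintegral_mono hslice
    _ = ENNReal.ofReal (2 * r) * volume T := by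
        rw [lintegral_indicator hT]; simp [mul_comm]

lemma vol_cyl (e : Sp3) (he : ‖e‖ = 1) (R b : ℝ) :
    volume {ξ : Sp3 | |⟪ξ, e⟫| ≤ R ∧ ‖ξ - ⟪ξ, e⟫ • e‖ ≤ b} ≤
      ENNReal.ofReal (2 * R) * (ENNReal.ofReal (2 * b) * ENNReal.ofReal (2 * b)) := by
  classical
  set e₀ : Sp3 := EuclideanSpace.single (0 : Fin 3) (1 : ℝ) with he₀def
  have he₀ : ‖e₀‖ = 1 := by simp [he₀def, EuclideanSpace.norm_single]
  set T : Sp3 ≃ₗᵢ[ℝ] Sp3 := Submodule.reflection (ℝ ∙ (e - e₀))ᗮ with hTdef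
  have hTe : T e = e₀ := Submodule.reflection_sub (he.trans he₀.symm)
  set Box : Set Sp3 := {y : Sp3 | |y 0| ≤ R ∧ |y 1| ≤ b ∧ |y 2| ≤ b} with hBox
  have hsub : {ξ : Sp3 | |⟪ξ, e⟫| ≤ R ∧ ‖ξ - ⟪ξ, e⟫ • e‖ ≤ b} ⊆ ⇑T ⁻¹' Box := by
    intro ξ hξ
    obtain ⟨h1, h2⟩ := hξ
    have hip : ⟪ξ, e⟫ = (T ξ) 0 := by
      have : ⟪ξ, e⟫ = ⟪T ξ, T e⟫ := (T.inner_map_map ξ e).symm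
      rw [this, hTe, he₀def]
      rw [EuclideanSpace.inner_single_right]
      simp [RCLike.conj_to_real]
    have hperp : ‖T ξ - (T ξ 0) • e₀‖ ≤ b := by
      have : T ξ - (T ξ 0) • e₀ = T (ξ - ⟪ξ, e⟫ • e) := by
        rw [map_sub, LinearIsometryEquiv.map_smul, hTe, hip]
      rw [this, T.norm_map]; exact h2
    have hcoord : ∀ i : Fin 3, i ≠ 0 → |T ξ i| ≤ b := by
      intro i hi
      have h0 : (T ξ - (T ξ 0) • e₀) i = T ξ i := by
        simp only [he₀def, PiLp.sub_apply, PiLp.smul_apply, EuclideanSpace.single_apply,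
          smul_eq_mul]
        rw [if_neg hi]
        ring
      calc |T ξ i| = |(T ξ - (T ξ 0) • e₀) i| := by rw [h0]
        _ ≤ ‖T ξ - (T ξ 0) • e₀‖ := by
            rw [EuclideanSpace.norm_eq, ← Real.sqrt_sq_eq_abs]
            apply Real.sqrt_le_sqrt
            have := Finset.single_le_sum (f := fun j => ((T ξ - (T ξ 0) • e₀) j)^2)
              (fun j _ => sq_nonneg _) (Finset.mem_univ i)
            simpa using this
        _ ≤ b := hperp
    refine ⟨?_, hcoord 1 (by decide), hcoord 2 (by decide)⟩
    rw [← hip]; exact h1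
  calc volume {ξ : Sp3 | |⟪ξ, e⟫| ≤ R ∧ ‖ξ - ⟪ξ, e⟫ • e‖ ≤ b}
      ≤ volume (⇑T ⁻¹' Box) := measure_mono hsub
    _ = volume Box := by
        have hBm : MeasurableSet Box := by
          have hm : ∀ i : Fin 3, Measurable fun y : Sp3 => y i := fun i =>
            (continuous_apply i).comp (PiLp.continuous_ofLp 2 fun _ : Fin 3 => ℝ) |>.measurable
          exact (measurableSet_le (hm 0).abs measurable_const).inter
            ((measurableSet_le (hm 1).abs measurable_const).inter
              (measurableSet_le (hm 2).abs measurable_const))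
        exact T.measurePreserving.measure_preimage hBm.nullMeasurableSet
    _ ≤ ENNReal.ofReal (2 * R) * (ENNReal.ofReal (2 * b) * ENNReal.ofReal (2 * b)) := by
        have hsub2 : Box ⊆ (MeasurableEquiv.toLp 2 (Fin 3 → ℝ)).symm ⁻¹'
            (Set.univ.pi fun i : Fin 3 => Set.Icc (-(![R, b, b] i)) (![R, b, b] i)) := by
          intro y hy
          obtain ⟨hy0, hy1, hy2⟩ := hy
          intro i _
          fin_cases i
          · exact abs_le.mp hy0
          · exact abs_le.mp hy1
          · exact abs_le.mp hy2
        calc volume Box ≤ volume ((MeasurableEquiv.toLp 2 (Fin 3 → ℝ)).symm ⁻¹'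
              (Set.univ.pi fun i : Fin 3 => Set.Icc (-(![R, b, b] i)) (![R, b, b] i))) :=
              measure_mono hsub2
          _ = volume (Set.univ.pi fun i : Fin 3 => Set.Icc (-(![R, b, b] i)) (![R, b, b] i)) := by
              exact (EuclideanSpace.volume_preserving_symm_measurableEquiv_toLp (Fin 3)).measure_preimage
                (MeasurableSet.univ_pi fun i => measurableSet_Icc).nullMeasurableSet
          _ = ∏ i : Fin 3, ENNReal.ofReal ((![R, b, b] i) - (-(![R, b, b] i))) := by
              rw [volume_pi_pi]
              exact Finset.prod_congr rfl fun i _ => by rw [Real.volume_Icc]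
          _ = ENNReal.ofReal (2 * R) * (ENNReal.ofReal (2 * b) * ENNReal.ofReal (2 * b)) := by
              rw [Fin.prod_univ_three]
              simp [← two_mul, mul_assoc]

lemma tube_mem {ω : Set Sp3} (hω : ω ⊆ Metric.sphere 0 1)
    {θ : ℝ} (hθ0 : 0 ≤ θ)
    (hdiam : ∀ x ∈ ω, ∀ y ∈ ω, InnerProductGeometry.angle x y ≤ θ)
    {e : Sp3} (he : e ∈ ω) {ξ : Sp3} (hξ0 : ξ ≠ 0) (hdir : ‖ξ‖⁻¹ • ξ ∈ ω)
    {R : ℝ} (hn : ‖ξ‖ ≤ R) :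
    |⟪ξ, e⟫| ≤ R ∧ ‖ξ - ⟪ξ, e⟫ • e‖ ≤ R * θ := by
  have hne : ‖e‖ = 1 := by
    have := hω he; rwa [Metric.mem_sphere, dist_zero_right] at this
  have hnξ : (0:ℝ) < ‖ξ‖ := norm_pos_iff.mpr hξ0
  have hR : 0 ≤ R := le_trans (norm_nonneg ξ) hn
  constructor
  · calc |⟪ξ, e⟫| ≤ ‖ξ‖ * ‖e‖ := abs_real_inner_le_norm ξ e
      _ ≤ R := by rw [hne]; simpa using hn
  · set α := InnerProductGeometry.angle ξ e with hα
    have hαeq : α = InnerProductGeometry.angle (‖ξ‖⁻¹ • ξ) e :=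
      (InnerProductGeometry.angle_smul_left_of_pos ξ e (inv_pos.mpr hnξ)).symm
    have hαθ : α ≤ θ := hαeq ▸ hdiam _ hdir _ he
    have hα0 : 0 ≤ α := InnerProductGeometry.angle_nonneg ξ e
    have hαπ : α ≤ π := InnerProductGeometry.angle_le_pi ξ e
    have hcos : ⟪ξ, e⟫ = ‖ξ‖ * Real.cos α := by
      have := InnerProductGeometry.cos_angle ξ e
      rw [← hα] at this
      rw [this, hne]
      field_simp
    have hsq : ‖ξ - ⟪ξ, e⟫ • e‖ ^ 2 = ‖ξ‖ ^ 2 * Real.sin α ^ 2 := by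
      have hexp : ‖ξ - ⟪ξ, e⟫ • e‖ ^ 2 = ‖ξ‖ ^ 2 - 2 * ⟪ξ, ⟪ξ, e⟫ • e⟫ + ‖⟪ξ, e⟫ • e‖ ^ 2 :=
        norm_sub_sq_real ξ _
      rw [real_inner_smul_right, norm_smul, norm_eq_abs, hne, mul_one] at hexp
      have hpyth := Real.sin_sq_add_cos_sq α
      rw [hexp, hcos]
      rw [sq_abs]
      nlinarith
    have hsin0 : 0 ≤ Real.sin α := Real.sin_nonneg_of_nonneg_of_le_pi hα0 hαπ
    have hsinθ : Real.sin α ≤ θ := le_trans (Real.sin_le hα0) hαθ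
    have h1 : ‖ξ‖ * Real.sin α ≤ R * θ := mul_le_mul hn hsinθ hsin0 hR
    have hbd : ‖ξ - ⟪ξ, e⟫ • e‖ ^ 2 ≤ (R * θ) ^ 2 := by
      rw [hsq]; nlinarith [h1, mul_nonneg hnξ.le hsin0]
    nlinarith [norm_nonneg (ξ - ⟪ξ, e⟫ • e), mul_nonneg hR hθ0]

lemma two_conj : Real.HolderConjugate 2 2 := Real.HolderConjugate.two_two

lemma lint_CS (u v : Mst → ℝ≥0∞) (hu : AEMeasurable u volume) (hv : AEMeasurable v volume) :
    ∫⁻ y, u y * v y ≤ (∫⁻ y, u y ^ (2:ℝ)) ^ (1/2:ℝ) * (∫⁻ y, v y ^ (2:ℝ)) ^ (1/2:ℝ) := by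
  have := ENNReal.lintegral_mul_le_Lp_mul_Lq volume two_conj hu hv
  simpa [Pi.mul_apply] using this

lemma keyCS (F Gout Gin : Mst → ℝ≥0∞) (hF : Measurable F) (hGout : Measurable Gout)
    (hGin : Measurable Gin)
    (S K : Set Mst) (hS : MeasurableSet S) (hK : MeasurableSet K)
    (hGS : ∀ y, y ∉ S → Gin y = 0) (hFK : ∀ z, z ∉ K → F z = 0)
    (B : ℝ≥0∞) (hB : ∀ x : Mst, volume {y : Mst | y ∈ S ∧ x + y ∈ K} ≤ B) :
    ∫⁻ x, Gout x * ∫⁻ y, F (x + y) * Gin y ≤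
      (∫⁻ x, Gout x ^ (2:ℝ)) ^ (1/2:ℝ) *
        (B * ((∫⁻ z, F z ^ (2:ℝ)) * ∫⁻ y, Gin y ^ (2:ℝ))) ^ (1/2:ℝ) := by
  have hFadd : Measurable fun p : Mst × Mst => F (p.1 + p.2) := hF.comp measurable_add
  have hprod : Measurable fun p : Mst × Mst => F (p.1 + p.2) * Gin p.2 :=
    hFadd.mul (hGin.comp measurable_snd)
  have hH : Measurable fun x : Mst => ∫⁻ y, F (x + y) * Gin y := hprod.lintegral_prod_right'
  have hVm : Measurable fun x : Mst => ∫⁻ y, F (x + y) ^ (2:ℝ) * Gin y ^ (2:ℝ) :=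
    ((hFadd.pow_const (2:ℝ)).mul ((hGin.comp measurable_snd).pow_const (2:ℝ))).lintegral_prod_right'
  have stepA : ∀ x : Mst, (∫⁻ y, F (x + y) * Gin y) ^ (2:ℝ) ≤
      B * ∫⁻ y, F (x + y) ^ (2:ℝ) * Gin y ^ (2:ℝ) := by
    intro x
    set E : Set Mst := S ∩ ((fun y => x + y) ⁻¹' K) with hE
    have hEm : MeasurableSet E := hS.inter ((measurable_const_add x) hK)
    have hpt : ∀ y, F (x + y) * Gin y = E.indicator 1 y * (F (x + y) * Gin y) := by
      intro y
      by_cases hy : y ∈ E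
      · rw [Set.indicator_of_mem hy]; simp
      · rw [Set.indicator_of_notMem hy, zero_mul]
        rcases not_and_or.mp (fun h => hy ⟨h.1, h.2⟩) with h | h
        · rw [hGS y h, mul_zero]
        · rw [hFK _ h, zero_mul]
    have hcs : ∫⁻ y, F (x + y) * Gin y ≤
        (volume E) ^ (1/2:ℝ) * (∫⁻ y, (F (x + y) * Gin y) ^ (2:ℝ)) ^ (1/2:ℝ) := by
      calc ∫⁻ y, F (x + y) * Gin y = ∫⁻ y, E.indicator 1 y * (F (x + y) * Gin y) :=
            lintegral_congr hpt
        _ ≤ (∫⁻ y, E.indicator 1 y ^ (2:ℝ)) ^ (1/2:ℝ) *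
              (∫⁻ y, (F (x + y) * Gin y) ^ (2:ℝ)) ^ (1/2:ℝ) := by
            refine lint_CS _ _ ?_ ?_
            · exact ((measurable_one.indicator hEm)).aemeasurable
            · exact ((hF.comp (measurable_const_add x)).mul hGin).aemeasurable
        _ = (volume E) ^ (1/2:ℝ) * (∫⁻ y, (F (x + y) * Gin y) ^ (2:ℝ)) ^ (1/2:ℝ) := by
            congr 1
            have : ∀ y, E.indicator (1 : Mst → ℝ≥0∞) y ^ (2:ℝ) = E.indicator 1 y := by
              intro y
              by_cases hy : y ∈ E
              · rw [Set.indicator_of_mem hy]; simp [ENNReal.one_rpow]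
              · rw [Set.indicator_of_notMem hy]
                simp [ENNReal.zero_rpow_of_pos]
            rw [lintegral_congr this, lintegral_indicator_one hEm]
    have hsq : (∫⁻ y, F (x + y) * Gin y) ^ (2:ℝ) ≤
        volume E * ∫⁻ y, (F (x + y) * Gin y) ^ (2:ℝ) := by
      calc (∫⁻ y, F (x + y) * Gin y) ^ (2:ℝ)
          ≤ ((volume E) ^ (1/2:ℝ) * (∫⁻ y, (F (x + y) * Gin y) ^ (2:ℝ)) ^ (1/2:ℝ)) ^ (2:ℝ) :=
            ENNReal.rpow_le_rpow hcs (by norm_num)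
        _ = volume E * ∫⁻ y, (F (x + y) * Gin y) ^ (2:ℝ) := by
            rw [ENNReal.mul_rpow_of_nonneg _ _ (by norm_num : (0:ℝ) ≤ 2),
              ← ENNReal.rpow_mul, ← ENNReal.rpow_mul]
            norm_num
    calc (∫⁻ y, F (x + y) * Gin y) ^ (2:ℝ)
        ≤ volume E * ∫⁻ y, (F (x + y) * Gin y) ^ (2:ℝ) := hsq
      _ ≤ B * ∫⁻ y, F (x + y) ^ (2:ℝ) * Gin y ^ (2:ℝ) := by
          refine mul_le_mul' (hB x) (le_of_eq (lintegral_congr fun y => ?_))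
          exact ENNReal.mul_rpow_of_nonneg _ _ (by norm_num)
  calc ∫⁻ x, Gout x * ∫⁻ y, F (x + y) * Gin y
      ≤ (∫⁻ x, Gout x ^ (2:ℝ)) ^ (1/2:ℝ) *
          (∫⁻ x, (∫⁻ y, F (x + y) * Gin y) ^ (2:ℝ)) ^ (1/2:ℝ) :=
        lint_CS _ _ hGout.aemeasurable hH.aemeasurable
    _ ≤ (∫⁻ x, Gout x ^ (2:ℝ)) ^ (1/2:ℝ) *
          (B * ((∫⁻ z, F z ^ (2:ℝ)) * ∫⁻ y, Gin y ^ (2:ℝ))) ^ (1/2:ℝ) := by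
        refine mul_le_mul' le_rfl (ENNReal.rpow_le_rpow ?_ (by norm_num))
        calc ∫⁻ x, (∫⁻ y, F (x + y) * Gin y) ^ (2:ℝ)
            ≤ ∫⁻ x, B * ∫⁻ y, F (x + y) ^ (2:ℝ) * Gin y ^ (2:ℝ) := lintegral_mono stepA
          _ = B * ∫⁻ x, ∫⁻ y, F (x + y) ^ (2:ℝ) * Gin y ^ (2:ℝ) := lintegral_const_mul B hVm
          _ = B * ∫⁻ y, ∫⁻ x, F (x + y) ^ (2:ℝ) * Gin y ^ (2:ℝ) := by
              congr 1
              refine lintegral_lintegral_swap ?_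
              exact ((hFadd.pow_const (2:ℝ)).mul
                ((hGin.comp measurable_snd).pow_const (2:ℝ))).aemeasurable
          _ = B * ((∫⁻ z, F z ^ (2:ℝ)) * ∫⁻ y, Gin y ^ (2:ℝ)) := by
              congr 1
              calc ∫⁻ y, ∫⁻ x, F (x + y) ^ (2:ℝ) * Gin y ^ (2:ℝ)
                  = ∫⁻ y, (∫⁻ x, F (x + y) ^ (2:ℝ)) * Gin y ^ (2:ℝ) := by
                    refine lintegral_congr fun y => ?_
                    exact lintegral_mul_const _ ((hF.comp (measurable_add_const y)).pow_const _)
                _ = ∫⁻ y, (∫⁻ z, F z ^ (2:ℝ)) * Gin y ^ (2:ℝ) := by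
                    refine lintegral_congr fun y => ?_
                    congr 1
                    exact lintegral_add_right_eq_self (fun z => F z ^ (2:ℝ)) y
                _ = (∫⁻ z, F z ^ (2:ℝ)) * ∫⁻ y, Gin y ^ (2:ℝ) :=
                    lintegral_const_mul _ (hGin.pow_const _)

lemma elp2 (h : Mst → ℂ) : eLpNorm h 2 volume = (∫⁻ z, (‖h z‖₊ : ℝ≥0∞) ^ (2:ℝ)) ^ (1/2:ℝ) := by
  rw [eLpNorm_eq_lintegral_rpow_enorm_toReal (by norm_num) (by norm_num)]
  norm_num
  rfl

lemma tube_vol_le {N₁ N A Kc : ℝ} (hN₁ : 1 ≤ N₁) (hN : 0 < N) (hA : N₁ ^ (3/2:ℝ) ≤ A)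
    (hK : N ≤ Kc * N₁) (hKc : 0 < Kc) :
    2 * (2 * N) * (2 * (2 * N * (1/A)) * (2 * (2 * N * (1/A)))) ≤ 64 * Kc ^ 3 := by
  have hN₁0 : (0:ℝ) < N₁ := lt_of_lt_of_le one_pos hN₁
  have hA0 : (0:ℝ) < A := lt_of_lt_of_le (Real.rpow_pos_of_pos hN₁0 _) hA
  have hA2 : N₁ ^ 3 ≤ A ^ 2 := by
    have h1 : (N₁ ^ (3/2:ℝ)) ^ 2 ≤ A ^ 2 := by
      apply pow_le_pow_left₀ (Real.rpow_nonneg hN₁0.le _) hA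
    have h2 : (N₁ ^ (3/2:ℝ)) ^ 2 = N₁ ^ 3 := by
      rw [← Real.rpow_natCast (N₁ ^ (3/2:ℝ)) 2, ← Real.rpow_mul hN₁0.le]
      have h3 : ((3:ℝ)/2) * ((2:ℕ):ℝ) = ((3:ℕ):ℝ) := by norm_num
      rw [h3, Real.rpow_natCast]
    linarith [h2 ▸ h1]
  have hNK3 : N ^ 3 ≤ Kc ^ 3 * N₁ ^ 3 := by
    have h := pow_le_pow_left₀ hN.le hK 3
    rwa [mul_pow] at h
  have key : 64 * N ^ 3 ≤ 64 * Kc ^ 3 * A ^ 2 := by nlinarith [pow_pos hKc 3]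
  have hgoal : 2 * (2 * N) * (2 * (2 * N * (1/A)) * (2 * (2 * N * (1/A)))) =
      64 * N ^ 3 / A ^ 2 := by field_simp; ring
  rw [hgoal, div_le_iff₀ (by positivity)]
  linarith


/-- Small angular cap bilinear estimate (Proposition 3.2). -/
theorem small_cap_bilinear (c : ℝ) (hc0 : 0 < c) (hc1 : c < 1) :
    ∃ C : ℝ≥0,
      ∀ N₀ N₁ N₂ L₀ L₁ L₂ : ℝ,
        IsDyadic N₀ → IsDyadic N₁ → IsDyadic N₂ →
        IsDyadic L₀ → IsDyadic L₁ → IsDyadic L₂ →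
        1 < N₀ → N₀ ≤ 2 ^ 7 * (1 - c)⁻¹ * N₁ →
        N₁ ≤ 2 ^ 4 * (1 - c)⁻¹ * N₂ → N₂ ≤ 2 ^ 4 * (1 - c)⁻¹ * N₁ →
        ∀ A : ℝ, N₁ ^ (3 / 2 : ℝ) ≤ A →
          ∀ ω₁ ω₂ : Set Sp3, ω₁ ⊆ Metric.sphere 0 1 → ω₂ ⊆ Metric.sphere 0 1 →
            (∀ x ∈ ω₁, ∀ y ∈ ω₁, InnerProductGeometry.angle x y ≤ 1 / A) →
            (∀ x ∈ ω₂, ∀ y ∈ ω₂, InnerProductGeometry.angle x y ≤ 1 / A) →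
            ∀ σ : ℝ, (σ = 1 ∨ σ = -1) →
              ∀ f g₁ g₂ : Sp3 × ℝ → ℂ,
                MeasureTheory.MemLp f 2 volume → MeasureTheory.MemLp g₁ 2 volume →
                MeasureTheory.MemLp g₂ 2 volume →
                Function.support f ⊆ Kset σ c N₀ L₀ →
                Function.support g₁ ⊆ Qcap ω₁ ∩ Kset (-1) 1 N₁ L₁ →
                Function.support g₂ ⊆ Qcap ω₂ ∩ Kset 1 1 N₂ L₂ →
                ENNReal.ofReal ‖trI f g₁ g₂‖ ≤
                  C * ENNReal.ofReal (min L₀ (min L₁ L₂) ^ (1 / 2 : ℝ)) *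
                    eLpNorm f 2 volume * eLpNorm g₁ 2 volume * eLpNorm g₂ 2 volume := by
  classical
  have hc' : (0:ℝ) < 1 - c := by linarith
  set Kc : ℝ := 2 ^ 4 * (1 - c)⁻¹ with hKcdef
  have hKc0 : (0:ℝ) < Kc := by positivity
  have hKc1 : (1:ℝ) ≤ Kc := by
    have h1 : (1:ℝ) ≤ (1 - c)⁻¹ := by
      rw [← one_div, le_div_iff₀ hc']
      linarith
    calc (1:ℝ) ≤ (1 - c)⁻¹ := h1
      _ ≤ 2 ^ 4 * (1 - c)⁻¹ := by nlinarith
  set Dc : ℝ := 64 * Kc ^ 3 with hDcdef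
  have hDc0 : (0:ℝ) < Dc := by positivity
  refine ⟨((4 * Dc) ^ (1/2:ℝ)).toNNReal, ?_⟩
  intro N₀ N₁ N₂ L₀ L₁ L₂ hdN₀ hdN₁ hdN₂ hdL₀ hdL₁ hdL₂ hN₀1 hN₀₁ hN₁₂ hN₂₁ A hA ω₁ ω₂
    hω₁ hω₂ hdiam₁ hdiam₂ σ hσ f g₁ g₂ hf hg₁ hg₂ hsf hsg₁ hsg₂
  have hN₁1 : (1:ℝ) ≤ N₁ := hdN₁.one_le
  have hN₂1 : (1:ℝ) ≤ N₂ := hdN₂.one_le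
  have hL₀1 : (1:ℝ) ≤ L₀ := hdL₀.one_le
  have hL₁1 : (1:ℝ) ≤ L₁ := hdL₁.one_le
  have hL₂1 : (1:ℝ) ≤ L₂ := hdL₂.one_le
  have hN₁0 : (0:ℝ) < N₁ := by linarith
  have hA1 : (1:ℝ) ≤ A := by
    have h0 : (1:ℝ) = N₁ ^ (0:ℝ) := (Real.rpow_zero N₁).symm
    calc (1:ℝ) = N₁ ^ (0:ℝ) := h0
      _ ≤ N₁ ^ (3/2:ℝ) := Real.rpow_le_rpow_of_exponent_le hN₁1 (by norm_num)
      _ ≤ A := hA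
  have hA0 : (0:ℝ) < A := by linarith
  have hθ0 : (0:ℝ) ≤ 1/A := by positivity
  -- trivial cases when a cap is empty
  by_cases hω₁e : ω₁.Nonempty
  swap
  · have hg1z : ∀ y, g₁ y = 0 := by
      intro y
      by_contra hy
      exact hω₁e ⟨_, ((hsg₁ hy).1).2⟩
    have : trI f g₁ g₂ = 0 := by
      simp [trI, hg1z]
    rw [this]
    simp only [norm_zero, ENNReal.ofReal_zero]
    exact zero_le
  by_cases hω₂e : ω₂.Nonempty
  swap
  · have hg2z : ∀ y, g₂ y = 0 := by
      intro y
      by_contra hy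
      exact hω₂e ⟨_, ((hsg₂ hy).1).2⟩
    have : trI f g₁ g₂ = 0 := by
      simp [trI, hg2z]
    rw [this]
    simp only [norm_zero, ENNReal.ofReal_zero]
    exact zero_le
  obtain ⟨e₁, he₁⟩ := hω₁e
  obtain ⟨e₂, he₂⟩ := hω₂e
  have hne₁ : ‖e₁‖ = 1 := by
    have := hω₁ he₁; rwa [Metric.mem_sphere, dist_zero_right] at this
  have hne₂ : ‖e₂‖ = 1 := by
    have := hω₂ he₂; rwa [Metric.mem_sphere, dist_zero_right] at this
  -- the sets
  set K₀ : Set Mst := Kset σ c N₀ L₀ with hK₀def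
  have hK₀m : MeasurableSet K₀ := measurableSet_Kset σ c N₀ L₀
  have hinner : ∀ e : Sp3, Continuous fun ξ : Sp3 => ⟪ξ, e⟫ := fun e =>
    continuous_id.inner continuous_const
  have hTm : ∀ (e : Sp3) (R b : ℝ),
      MeasurableSet {ξ : Sp3 | |⟪ξ, e⟫| ≤ R ∧ ‖ξ - ⟪ξ, e⟫ • e‖ ≤ b} := by
    intro e R b
    have hm1 : Measurable fun ξ : Sp3 => |⟪ξ, e⟫| := (hinner e).abs.measurable
    have hm2 : Measurable fun ξ : Sp3 => ‖ξ - ⟪ξ, e⟫ • e‖ :=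
      (continuous_id.sub ((hinner e).smul continuous_const)).norm.measurable
    exact (measurableSet_le hm1 measurable_const).inter (measurableSet_le hm2 measurable_const)
  set T₁ : Set Sp3 := {ξ : Sp3 | |⟪ξ, e₁⟫| ≤ 2*N₁ ∧ ‖ξ - ⟪ξ, e₁⟫ • e₁‖ ≤ 2*N₁*(1/A)} with hT₁def
  set T₂ : Set Sp3 := {ξ : Sp3 | |⟪ξ, e₂⟫| ≤ 2*N₂ ∧ ‖ξ - ⟪ξ, e₂⟫ • e₂‖ ≤ 2*N₂*(1/A)} with hT₂def
  have hT₁m : MeasurableSet T₁ := hTm e₁ _ _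
  have hT₂m : MeasurableSet T₂ := hTm e₂ _ _
  set S₁ : Set Mst := {y : Mst | y.1 ∈ T₁ ∧ |y.2 - ‖y.1‖| ≤ 2*L₁} with hS₁def
  set S₂ : Set Mst := {y : Mst | y.1 ∈ T₂ ∧ |y.2 - -‖y.1‖| ≤ 2*L₂} with hS₂def
  have hS₁m : MeasurableSet S₁ :=
    (measurable_fst hT₁m).inter
      (measurableSet_le (measurable_snd.sub measurable_fst.norm).abs measurable_const)
  have hS₂m : MeasurableSet S₂ :=
    (measurable_fst hT₂m).inter
      (measurableSet_le (measurable_snd.sub measurable_fst.norm.neg).abs measurable_const)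
  -- supports
  have hss₁ : Function.support g₁ ⊆ S₁ := by
    intro y hy
    obtain ⟨⟨hy0, hydir⟩, hKy⟩ := hsg₁ hy
    have hn2 : ‖y.1‖ ≤ 2*N₁ := le_trans (le_trans (le_abs_self _) (abs_le_jb _)) hKy.2.1
    have ht := tube_mem hω₁ hθ0 hdiam₁ he₁ hy0 hydir hn2
    refine ⟨⟨ht.1, ht.2⟩, ?_⟩
    have h4 := hKy.2.2.2
    have habs : |y.2 - ‖y.1‖| = |y.2 + (-1) * 1 * ‖y.1‖| := by ring_nf
    rw [habs]
    exact le_trans (abs_le_jb _) h4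
  have hss₂ : Function.support g₂ ⊆ S₂ := by
    intro y hy
    obtain ⟨⟨hy0, hydir⟩, hKy⟩ := hsg₂ hy
    have hn2 : ‖y.1‖ ≤ 2*N₂ := le_trans (le_trans (le_abs_self _) (abs_le_jb _)) hKy.2.1
    have ht := tube_mem hω₂ hθ0 hdiam₂ he₂ hy0 hydir hn2
    refine ⟨⟨ht.1, ht.2⟩, ?_⟩
    have h4 := hKy.2.2.2
    have habs : |y.2 - -‖y.1‖| = |y.2 + 1 * 1 * ‖y.1‖| := by ring_nf
    rw [habs]
    exact le_trans (abs_le_jb _) h4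
  -- measurable envelopes
  set f' : Mst → ℂ := hf.1.mk f with hf'def
  set g₁' : Mst → ℂ := hg₁.1.mk g₁ with hg₁'def
  set g₂' : Mst → ℂ := hg₂.1.mk g₂ with hg₂'def
  set F : Mst → ℝ≥0∞ := K₀.indicator fun z => (‖f' z‖₊ : ℝ≥0∞) with hFdef
  set G₁ : Mst → ℝ≥0∞ := S₁.indicator fun z => (‖g₁' z‖₊ : ℝ≥0∞) with hG₁def
  set G₂ : Mst → ℝ≥0∞ := S₂.indicator fun z => (‖g₂' z‖₊ : ℝ≥0∞) with hG₂def
  have hFm : Measurable F :=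
    (hf.1.stronglyMeasurable_mk.measurable.nnnorm.coe_nnreal_ennreal).indicator hK₀m
  have hG1m : Measurable G₁ :=
    (hg₁.1.stronglyMeasurable_mk.measurable.nnnorm.coe_nnreal_ennreal).indicator hS₁m
  have hG2m : Measurable G₂ :=
    (hg₂.1.stronglyMeasurable_mk.measurable.nnnorm.coe_nnreal_ennreal).indicator hS₂m
  have hFae : (fun z => (‖f z‖₊ : ℝ≥0∞)) =ᵐ[volume] F := by
    filter_upwards [hf.1.ae_eq_mk] with z hz
    by_cases hzK : z ∈ K₀
    · rw [hFdef, Set.indicator_of_mem hzK, hz]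
    · rw [hFdef, Set.indicator_of_notMem hzK]
      have : f z = 0 := Function.notMem_support.mp fun hmem => hzK (hsf hmem)
      simp [this]
  have hG1ae : (fun z => (‖g₁ z‖₊ : ℝ≥0∞)) =ᵐ[volume] G₁ := by
    filter_upwards [hg₁.1.ae_eq_mk] with z hz
    by_cases hzK : z ∈ S₁
    · rw [hG₁def, Set.indicator_of_mem hzK, hz]
    · rw [hG₁def, Set.indicator_of_notMem hzK]
      have : g₁ z = 0 := Function.notMem_support.mp fun hmem => hzK (hss₁ hmem)
      simp [this]
  have hG2ae : (fun z => (‖g₂ z‖₊ : ℝ≥0∞)) =ᵐ[volume] G₂ := by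
    filter_upwards [hg₂.1.ae_eq_mk] with z hz
    by_cases hzK : z ∈ S₂
    · rw [hG₂def, Set.indicator_of_mem hzK, hz]
    · rw [hG₂def, Set.indicator_of_notMem hzK]
      have : g₂ z = 0 := Function.notMem_support.mp fun hmem => hzK (hss₂ hmem)
      simp [this]
  have hFK : ∀ z, z ∉ K₀ → F z = 0 := fun z hz => Set.indicator_of_notMem hz _
  have hG1S : ∀ z, z ∉ S₁ → G₁ z = 0 := fun z hz => Set.indicator_of_notMem hz _
  have hG2S : ∀ z, z ∉ S₂ → G₂ z = 0 := fun z hz => Set.indicator_of_notMem hz _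
  -- norms
  have hNf : eLpNorm f 2 volume = (∫⁻ z, F z ^ (2:ℝ)) ^ (1/2:ℝ) := by
    rw [elp2]
    congr 1
    refine lintegral_congr_ae ?_
    filter_upwards [hFae] with z hz
    rw [hz]
  have hNg1 : eLpNorm g₁ 2 volume = (∫⁻ z, G₁ z ^ (2:ℝ)) ^ (1/2:ℝ) := by
    rw [elp2]
    congr 1
    refine lintegral_congr_ae ?_
    filter_upwards [hG1ae] with z hz
    rw [hz]
  have hNg2 : eLpNorm g₂ 2 volume = (∫⁻ z, G₂ z ^ (2:ℝ)) ^ (1/2:ℝ) := by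
    rw [elp2]
    congr 1
    refine lintegral_congr_ae ?_
    filter_upwards [hG2ae] with z hz
    rw [hz]
  -- step 0
  have h0 : ENNReal.ofReal ‖trI f g₁ g₂‖ ≤
      ∫⁻ q : Mst × Mst, (‖f (q.1 + q.2)‖₊ : ℝ≥0∞) * ‖g₁ q.1‖₊ * ‖g₂ q.2‖₊ := by
    have htri : trI f g₁ g₂ = ∫ q : Mst × Mst, f (q.1 + q.2) * g₁ q.1 * g₂ q.2 := rfl
    rw [htri]
    calc ENNReal.ofReal ‖∫ q : Mst × Mst, f (q.1 + q.2) * g₁ q.1 * g₂ q.2‖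
        ≤ ENNReal.ofReal
            ((∫⁻ q : Mst × Mst, ENNReal.ofReal ‖f (q.1 + q.2) * g₁ q.1 * g₂ q.2‖).toReal) :=
          ENNReal.ofReal_le_ofReal (norm_integral_le_lintegral_norm _)
      _ ≤ ∫⁻ q : Mst × Mst, ENNReal.ofReal ‖f (q.1 + q.2) * g₁ q.1 * g₂ q.2‖ :=
          ENNReal.ofReal_toReal_le
      _ = ∫⁻ q : Mst × Mst, (‖f (q.1 + q.2)‖₊ : ℝ≥0∞) * ‖g₁ q.1‖₊ * ‖g₂ q.2‖₊ := by
          refine lintegral_congr fun q => ?_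
          rw [norm_mul, norm_mul, ENNReal.ofReal_mul (by positivity),
            ENNReal.ofReal_mul (norm_nonneg _), ofReal_norm_eq_enorm, enorm_eq_nnnorm,
            ofReal_norm_eq_enorm, enorm_eq_nnnorm, ofReal_norm_eq_enorm, enorm_eq_nnnorm]
  -- quasi measure preserving plumbing
  have hshear : MeasurePreserving (fun z : Mst × Mst => (z.1, z.1 + z.2))
      (volume : Measure (Mst × Mst)) volume := by
    rw [Measure.volume_eq_prod]
    exact measurePreserving_prod_add volume volume
  have hqsnd : Measure.QuasiMeasurePreserving (Prod.snd : Mst × Mst → Mst) volume volume := by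
    rw [Measure.volume_eq_prod]
    exact Measure.quasiMeasurePreserving_snd
  have hqfst : Measure.QuasiMeasurePreserving (Prod.fst : Mst × Mst → Mst) volume volume := by
    rw [Measure.volume_eq_prod]
    exact Measure.quasiMeasurePreserving_fst
  have hqadd : Measure.QuasiMeasurePreserving (fun z : Mst × Mst => z.1 + z.2) volume volume :=
    hqsnd.comp hshear.quasiMeasurePreserving
  have hae : (fun q : Mst × Mst => (‖f (q.1 + q.2)‖₊ : ℝ≥0∞) * ‖g₁ q.1‖₊ * ‖g₂ q.2‖₊)
      =ᵐ[volume] fun q => F (q.1 + q.2) * G₁ q.1 * G₂ q.2 := by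
    have h1 := hqadd.ae_eq hFae
    have h2 := hqfst.ae_eq hG1ae
    have h3 := hqsnd.ae_eq hG2ae
    filter_upwards [h1, h2, h3] with q e1 e2 e3
    simp only [Function.comp] at e1 e2 e3
    rw [e1, e2, e3]
  have hΦm : Measurable fun q : Mst × Mst => F (q.1 + q.2) * G₁ q.1 * G₂ q.2 :=
    ((hFm.comp measurable_add).mul (hG1m.comp measurable_fst)).mul (hG2m.comp measurable_snd)
  -- Tonelli both ways
  have hJ1 : ∫⁻ q : Mst × Mst, F (q.1 + q.2) * G₁ q.1 * G₂ q.2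
      = ∫⁻ x, G₁ x * ∫⁻ y, F (x + y) * G₂ y := by
    rw [Measure.volume_eq_prod, lintegral_prod _ hΦm.aemeasurable]
    refine lintegral_congr fun x => ?_
    rw [← lintegral_const_mul (G₁ x)
      (show Measurable fun y : Mst => F (x + y) * G₂ y from
        (hFm.comp (measurable_const_add x)).mul hG2m)]
    exact lintegral_congr fun y => by ring
  have hJ2 : ∫⁻ q : Mst × Mst, F (q.1 + q.2) * G₁ q.1 * G₂ q.2
      = ∫⁻ y, G₂ y * ∫⁻ x, F (y + x) * G₁ x := by
    rw [Measure.volume_eq_prod, lintegral_prod_symm _ hΦm.aemeasurable]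
    refine lintegral_congr fun y => ?_
    rw [← lintegral_const_mul (G₂ y)
      (show Measurable fun x : Mst => F (y + x) * G₁ x from
        (hFm.comp (measurable_const_add y)).mul hG1m)]
    refine lintegral_congr fun x => ?_
    rw [add_comm y x]
    ring
  have hJ0 : ENNReal.ofReal ‖trI f g₁ g₂‖ ≤
      ∫⁻ q : Mst × Mst, F (q.1 + q.2) * G₁ q.1 * G₂ q.2 :=
    le_trans h0 (le_of_eq (lintegral_congr_ae hae))
  -- overlap bounds
  have hslabs : ∀ (S : Set Mst) (T : Set Sp3) (_ : MeasurableSet T) (LL : ℝ) (gg : Sp3 → ℝ)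
      (_ : Measurable gg)
      (_ : ∀ y : Mst, y ∈ S → y.1 ∈ T ∧ |y.2 - gg y.1| ≤ 2 * LL) (x : Mst),
      volume {y : Mst | y ∈ S ∧ x + y ∈ K₀} ≤
        ENNReal.ofReal (2 * (2 * min L₀ LL)) * volume T := by
    intro S T hTmm LL gg hggm hSsub x
    rcases le_total LL L₀ with hmin | hmin
    · have hsub : {y : Mst | y ∈ S ∧ x + y ∈ K₀} ⊆
          {y : Mst | y.1 ∈ T ∧ |y.2 - gg y.1| ≤ 2 * min L₀ LL} := by
        intro y hy
        have := hSsub y hy.1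
        exact ⟨this.1, by rw [min_eq_right hmin]; exact this.2⟩
      exact le_trans (measure_mono hsub) (vol_slab hTmm hggm _)
    · have hL₀LL : min L₀ LL = L₀ := min_eq_left hmin
      set gx : Sp3 → ℝ := fun ξ => -x.2 - σ * c * ‖x.1 + ξ‖ with hgxdef
      have hgxm : Measurable gx := by
        apply Continuous.measurable
        apply Continuous.sub continuous_const
        exact continuous_const.mul (continuous_norm.comp (continuous_const.add continuous_id))
      have hsub : {y : Mst | y ∈ S ∧ x + y ∈ K₀} ⊆
          {y : Mst | y.1 ∈ T ∧ |y.2 - gx y.1| ≤ 2 * min L₀ LL} := by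
        intro y hy
        refine ⟨(hSsub y hy.1).1, ?_⟩
        have h4 : jb ((x + y).2 + σ * c * ‖(x + y).1‖) ≤ 2 * L₀ := hy.2.2.2.2
        have hfst : (x + y).1 = x.1 + y.1 := rfl
        have hsnd : (x + y).2 = x.2 + y.2 := rfl
        rw [hfst, hsnd] at h4
        have habs : |y.2 - gx y.1| = |x.2 + y.2 + σ * c * ‖x.1 + y.1‖| := by
          rw [hgxdef]
          ring_nf
        rw [habs, hL₀LL]
        exact le_trans (abs_le_jb _) h4
      exact le_trans (measure_mono hsub) (vol_slab hTmm hgxm _)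
  have htube : ∀ (e : Sp3) (_ : ‖e‖ = 1) (N : ℝ), 1 ≤ N → N ≤ Kc * N₁ →
      volume {ξ : Sp3 | |⟪ξ, e⟫| ≤ 2*N ∧ ‖ξ - ⟪ξ, e⟫ • e‖ ≤ 2*N*(1/A)} ≤
        ENNReal.ofReal Dc := by
    intro e he N hN1 hNK
    calc volume {ξ : Sp3 | |⟪ξ, e⟫| ≤ 2*N ∧ ‖ξ - ⟪ξ, e⟫ • e‖ ≤ 2*N*(1/A)}
        ≤ ENNReal.ofReal (2 * (2*N)) *
            (ENNReal.ofReal (2 * (2*N*(1/A))) * ENNReal.ofReal (2 * (2*N*(1/A)))) :=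
          vol_cyl e he (2*N) (2*N*(1/A))
      _ = ENNReal.ofReal (2 * (2*N) * (2 * (2*N*(1/A)) * (2 * (2*N*(1/A))))) := by
          rw [← ENNReal.ofReal_mul (by positivity : (0:ℝ) ≤ 2 * (2*N*(1/A))),
            ← ENNReal.ofReal_mul (by positivity : (0:ℝ) ≤ 2 * (2*N))]
      _ ≤ ENNReal.ofReal Dc := by
          apply ENNReal.ofReal_le_ofReal
          rw [hDcdef]
          exact tube_vol_le hN₁1 (by linarith) hA hNK hKc0
  have htube1 : volume T₁ ≤ ENNReal.ofReal Dc := by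
    rw [hT₁def]
    exact htube e₁ hne₁ N₁ hN₁1 (by nlinarith)
  have htube2 : volume T₂ ≤ ENNReal.ofReal Dc := by
    rw [hT₂def]
    exact htube e₂ hne₂ N₂ hN₂1 hN₂₁
  have hmin01 : (0:ℝ) < min L₀ L₁ := lt_min (by linarith) (by linarith)
  have hmin02 : (0:ℝ) < min L₀ L₂ := lt_min (by linarith) (by linarith)
  have hB2 : ∀ x : Mst, volume {y : Mst | y ∈ S₂ ∧ x + y ∈ K₀} ≤
      ENNReal.ofReal ((4 * Dc) * min L₀ L₂) := by
    intro x
    calc volume {y : Mst | y ∈ S₂ ∧ x + y ∈ K₀}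
        ≤ ENNReal.ofReal (2 * (2 * min L₀ L₂)) * volume T₂ :=
          hslabs S₂ T₂ hT₂m L₂ (fun ξ => -‖ξ‖) measurable_norm.neg
            (fun y hy => ⟨hy.1, hy.2⟩) x
      _ ≤ ENNReal.ofReal (2 * (2 * min L₀ L₂)) * ENNReal.ofReal Dc :=
          mul_le_mul' le_rfl htube2
      _ = ENNReal.ofReal ((4 * Dc) * min L₀ L₂) := by
          rw [← ENNReal.ofReal_mul (by positivity)]
          congr 1
          ring
  have hB1 : ∀ x : Mst, volume {y : Mst | y ∈ S₁ ∧ x + y ∈ K₀} ≤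
      ENNReal.ofReal ((4 * Dc) * min L₀ L₁) := by
    intro x
    calc volume {y : Mst | y ∈ S₁ ∧ x + y ∈ K₀}
        ≤ ENNReal.ofReal (2 * (2 * min L₀ L₁)) * volume T₁ :=
          hslabs S₁ T₁ hT₁m L₁ (fun ξ => ‖ξ‖) measurable_norm
            (fun y hy => ⟨hy.1, hy.2⟩) x
      _ ≤ ENNReal.ofReal (2 * (2 * min L₀ L₁)) * ENNReal.ofReal Dc :=
          mul_le_mul' le_rfl htube1
      _ = ENNReal.ofReal ((4 * Dc) * min L₀ L₁) := by
          rw [← ENNReal.ofReal_mul (by positivity)]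
          congr 1
          ring
  -- the two key estimates
  have key2 := keyCS F G₁ G₂ hFm hG1m hG2m S₂ K₀ hS₂m hK₀m hG2S hFK _ hB2
  have key1 := keyCS F G₂ G₁ hFm hG2m hG1m S₁ K₀ hS₁m hK₀m hG1S hFK _ hB1
  have hCoe : (↑(((4 * Dc) ^ (1/2:ℝ)).toNNReal) : ℝ≥0∞) = ENNReal.ofReal ((4 * Dc) ^ (1/2:ℝ)) :=
    rfl
  have hsplit : ∀ Lm : ℝ, 0 < Lm → ∀ X Y : ℝ≥0∞,
      (ENNReal.ofReal ((4 * Dc) * Lm) * (X * Y)) ^ (1/2:ℝ) =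
        (↑(((4 * Dc) ^ (1/2:ℝ)).toNNReal) : ℝ≥0∞) * ENNReal.ofReal (Lm ^ (1/2:ℝ)) *
          (X ^ (1/2:ℝ) * Y ^ (1/2:ℝ)) := by
    intro Lm hLm X Y
    rw [ENNReal.mul_rpow_of_nonneg _ _ (by norm_num : (0:ℝ) ≤ 1/2),
      ENNReal.mul_rpow_of_nonneg _ _ (by norm_num : (0:ℝ) ≤ 1/2)]
    congr 1
    rw [ENNReal.ofReal_rpow_of_nonneg (by positivity) (by norm_num),
      Real.mul_rpow (by positivity) hLm.le,
      ENNReal.ofReal_mul (by positivity), hCoe]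
  rcases le_total L₁ L₂ with h12 | h12
  · -- min L₁ L₂ = L₁, use key1 (pair with g₁)
    rw [min_eq_left h12]
    calc ENNReal.ofReal ‖trI f g₁ g₂‖
        ≤ ∫⁻ q : Mst × Mst, F (q.1 + q.2) * G₁ q.1 * G₂ q.2 := hJ0
      _ = ∫⁻ y, G₂ y * ∫⁻ x, F (y + x) * G₁ x := hJ2
      _ ≤ (∫⁻ x, G₂ x ^ (2:ℝ)) ^ (1/2:ℝ) *
            (ENNReal.ofReal ((4 * Dc) * min L₀ L₁) *
              ((∫⁻ z, F z ^ (2:ℝ)) * ∫⁻ y, G₁ y ^ (2:ℝ))) ^ (1/2:ℝ) := key1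
      _ = ↑(((4 * Dc) ^ (1/2:ℝ)).toNNReal) * ENNReal.ofReal (min L₀ L₁ ^ (1/2:ℝ)) *
            eLpNorm f 2 volume * eLpNorm g₁ 2 volume * eLpNorm g₂ 2 volume := by
          rw [hsplit (min L₀ L₁) hmin01, hNf, hNg1, hNg2]
          ring
  · -- min L₁ L₂ = L₂, use key2 (pair with g₂)
    rw [min_eq_right h12]
    calc ENNReal.ofReal ‖trI f g₁ g₂‖
        ≤ ∫⁻ q : Mst × Mst, F (q.1 + q.2) * G₁ q.1 * G₂ q.2 := hJ0
      _ = ∫⁻ x, G₁ x * ∫⁻ y, F (x + y) * G₂ y := hJ1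
      _ ≤ (∫⁻ x, G₁ x ^ (2:ℝ)) ^ (1/2:ℝ) *
            (ENNReal.ofReal ((4 * Dc) * min L₀ L₂) *
              ((∫⁻ z, F z ^ (2:ℝ)) * ∫⁻ y, G₂ y ^ (2:ℝ))) ^ (1/2:ℝ) := key2
      _ = ↑(((4 * Dc) ^ (1/2:ℝ)).toNNReal) * ENNReal.ofReal (min L₀ L₂ ^ (1/2:ℝ)) *
            eLpNorm f 2 volume * eLpNorm g₁ 2 volume * eLpNorm g₂ 2 volume := by
          rw [hsplit (min L₀ L₂) hmin02, hNf, hNg1, hNg2]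
          ring
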